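/- arXiv:2501.03024 — 2 statements merged into one kernel-verified Lean document; each statement's English description precedes it below -/
import Mathlib

section
/- Define a sequence (Q_n) in the field of rational functions ℚ(X) by Q_0 = 1, Q_1 = X, and Q_{n+1} = (Q_n^2 − 1)/Q_{n−1} for n ≥ 1 (all Q_n with n ≥ 1 are nonzero, so the recursion is well defined). Then every Q_n is a polynomial with integer coefficients, i.e., lies in the image of ℤ[X] in ℚ(X). -/
private noncomputable def Pseq : ℕ → Polynomial ℤ
  | 0 => 1
  | 1 => Polynomial.X
  | (n + 2) => Polynomial.X * Pseq (n + 1) - Pseq n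

private lemma Pseq_zero : Pseq 0 = 1 := by rw [Pseq]
private lemma Pseq_one : Pseq 1 = Polynomial.X := by rw [Pseq]
private lemma Pseq_add2 (n : ℕ) :
    Pseq (n + 2) = Polynomial.X * Pseq (n + 1) - Pseq n := by rw [Pseq]

private lemma Pseq_eval (n : ℕ) :
    (Pseq n).eval 2 = (n : ℤ) + 1 ∧ (Pseq (n + 1)).eval 2 = (n : ℤ) + 2 := by
  induction n with
  | zero => simp [Pseq_zero, Pseq_one]
  | succ k ih =>
    obtain ⟨h1, h2⟩ := ih
    refine ⟨by rw [h2]; push_cast; ring, ?_⟩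
    show (Pseq (k + 2)).eval 2 = _
    rw [Pseq_add2]
    simp only [Polynomial.eval_sub, Polynomial.eval_mul, Polynomial.eval_X, h1, h2]
    push_cast
    ring

private lemma Pseq_ne_zero (n : ℕ) : Pseq n ≠ 0 := by
  intro h
  have := (Pseq_eval n).1
  rw [h] at this
  simp at this
  omega

private lemma Pseq_identity (n : ℕ) :
    Pseq (n + 2) * Pseq n = Pseq (n + 1) ^ 2 - 1 := by
  induction n with
  | zero =>
    rw [Pseq_add2, Pseq_zero, Pseq_one]
    ring
  | succ k ih =>
    show Pseq (k + 3) * Pseq (k + 1) = Pseq (k + 2) ^ 2 - 1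
    rw [show k + 3 = (k + 1) + 2 from rfl, Pseq_add2 (k + 1), Pseq_add2 k]
    rw [Pseq_add2 k] at ih
    linear_combination ih

noncomputable def iotaZ : Polynomial ℤ →+* RatFunc ℚ :=
  (algebraMap (Polynomial ℚ) (RatFunc ℚ)).comp (Polynomial.mapRingHom (Int.castRingHom ℚ))

lemma iotaZ_injective : Function.Injective iotaZ := by
  have h1 := RatFunc.algebraMap_injective ℚ
  have h2 : Function.Injective (Polynomial.map (Int.castRingHom ℚ)) :=
    Polynomial.map_injective _ Int.cast_injective
  exact fun a b h => h2 (h1 h)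

lemma iotaZ_ne_zero (p : Polynomial ℤ) (hp : p ≠ 0) : iotaZ p ≠ 0 := by
  intro h
  exact hp (iotaZ_injective (by simpa using h))

/-- define `(Qₙ)` in `ℚ(X)` by `Q₀ = 1`, `Q₁ = X`, and
`Qₙ₊₁ = (Qₙ² − 1)/Qₙ₋₁` for `n ≥ 1`.  Then all `Qₙ` with `n ≥ 1` are nonzero (so the
recursion is well defined), and every `Qₙ` lies in the image of `ℤ[X]` in `ℚ(X)`. -/
theorem stmt_4 (Q : ℕ → RatFunc ℚ) (h0 : Q 0 = 1) (h1 : Q 1 = RatFunc.X)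
    (hrec : ∀ n ≥ 1, Q (n + 1) = (Q n ^ 2 - 1) / Q (n - 1)) :
    (∀ n ≥ 1, Q n ≠ 0) ∧
    ∀ n : ℕ, ∃ p : Polynomial ℤ,
      Q n = algebraMap (Polynomial ℚ) (RatFunc ℚ) (p.map (Int.castRingHom ℚ)) := by
  have key : ∀ n : ℕ, Q n = iotaZ (Pseq n) ∧ Q (n + 1) = iotaZ (Pseq (n + 1)) := by
    intro n
    induction n with
    | zero =>
      constructor
      · rw [h0, Pseq_zero, map_one]
      · rw [h1, Pseq_one]
        simp [iotaZ, RatFunc.algebraMap_X]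
    | succ k ih =>
      obtain ⟨hk, hk1⟩ := ih
      refine ⟨hk1, ?_⟩
      have hr := hrec (k + 1) (by omega)
      simp only [Nat.add_sub_cancel] at hr
      rw [hr, hk, hk1]
      rw [div_eq_iff (iotaZ_ne_zero _ (Pseq_ne_zero k))]
      rw [← map_pow, ← map_one iotaZ, ← map_sub, ← map_mul]
      exact congrArg iotaZ (Pseq_identity k).symm
  constructor
  · intro n hn
    rw [(key n).1]
    exact iotaZ_ne_zero _ (Pseq_ne_zero n)
  · intro n
    exact ⟨Pseq n, (key n).1⟩
end

section
/- Let σ be the ring automorphism of the Laurent polynomial ring ℤ[y, y^{−1}] determined by σ(y) = y^{−1}. Then the subring of elements fixed by σ is exactly the subring generated by y + y^{−1}; that is, a Laurent polynomial p satisfies σ(p) = p if and only if p = f(y + y^{−1}) for some polynomial f ∈ ℤ[X]. -/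
open LaurentPolynomial

private lemma aeval_dickson_TT (n : ℕ) :
    Polynomial.aeval ((T 1 + T (-1) : LaurentPolynomial ℤ)) (Polynomial.dickson 1 (1 : ℤ) n)
      = T (n : ℤ) + T (-(n : ℤ)) := by
  have h : (T 1 : LaurentPolynomial ℤ) * T (-1) = 1 := by
    rw [← T_add]; norm_num
  rw [Polynomial.aeval_def, ← Polynomial.eval_map, Polynomial.map_dickson, map_one,
    Polynomial.dickson_one_one_eval_add_inv _ _ h, T_pow, T_pow]
  norm_num

private lemma halg_eq_C (a : ℤ) :
    (algebraMap ℤ (LaurentPolynomial ℤ)) a = C a := by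
  rw [LaurentPolynomial.algebraMap_apply]
  simp

private lemma aux_sym (N : ℕ) : ∀ p : LaurentPolynomial ℤ,
    (∀ n : ℤ, p.coeff (-n) = p.coeff n) → (∀ n : ℤ, N < n.natAbs → p.coeff n = 0) →
    ∃ f : Polynomial ℤ,
      p = Polynomial.aeval ((T 1 + T (-1) : LaurentPolynomial ℤ)) f := by
  induction N using Nat.strong_induction_on with
  | _ N ih =>
    intro p hsym hbd
    match N with
    | 0 =>
      refine ⟨Polynomial.C (p.coeff 0), ?_⟩
      rw [Polynomial.aeval_C, halg_eq_C, ← single_eq_C]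
      ext n
      rw [AddMonoidAlgebra.coeff_single, Finsupp.single_apply]
      rcases eq_or_ne n 0 with rfl | hn
      · simp
      · rw [hbd n (by omega), if_neg (fun h => hn h.symm)]
    | (M + 1) =>
      set a : ℤ := p.coeff ((M : ℤ) + 1) with ha
      set q : LaurentPolynomial ℤ :=
        p - C a * T ((M : ℤ) + 1) - C a * T (-((M : ℤ) + 1)) with hq
      have hqn : ∀ n : ℤ, q.coeff n =
          p.coeff n - (if (M : ℤ) + 1 = n then a else 0)
              - (if -((M : ℤ) + 1) = n then a else 0) := by
        intro n
        rw [hq, ← single_eq_C_mul_T, ← single_eq_C_mul_T]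
        rw [AddMonoidAlgebra.coeff_sub, AddMonoidAlgebra.coeff_sub, Finsupp.sub_apply, Finsupp.sub_apply,
          AddMonoidAlgebra.coeff_single, AddMonoidAlgebra.coeff_single]
        rw [Finsupp.single_apply, Finsupp.single_apply]
      have hqsym : ∀ n : ℤ, q.coeff (-n) = q.coeff n := by
        intro n
        rw [hqn, hqn, hsym]
        split_ifs <;> first | ring1 | (exfalso; omega)
      have hqbd : ∀ n : ℤ, M < n.natAbs → q.coeff n = 0 := by
        intro n hn
        rw [hqn]
        split_ifs with h1 h2 h2
        · omega
        · rw [← h1, ← ha]; ring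
        · rw [← h2, hsym ((M : ℤ) + 1), ← ha]; ring
        · rw [hbd n (by omega)]; ring
      obtain ⟨g, hg⟩ := ih M (by omega) q hqsym hqbd
      refine ⟨g + Polynomial.C a * Polynomial.dickson 1 (1 : ℤ) (M + 1), ?_⟩
      rw [map_add, map_mul, Polynomial.aeval_C, aeval_dickson_TT, ← hg, hq]
      have hcast : ((M + 1 : ℕ) : ℤ) = (M : ℤ) + 1 := by push_cast; ring
      rw [hcast, halg_eq_C]
      ring

open LaurentPolynomial in
/-- let `σ` be the ring automorphism of the Laurent polynomial ring
`ℤ[y, y⁻¹]` determined by `σ(y) = y⁻¹`.  The subring of elements fixed by `σ` is exactly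
the subring generated by `y + y⁻¹`: a Laurent polynomial `p` satisfies `σ(p) = p` if and
only if `p = f(y + y⁻¹)` for some polynomial `f ∈ ℤ[X]`. -/
theorem stmt_7 (σ : LaurentPolynomial ℤ ≃+* LaurentPolynomial ℤ)
    (hσ : σ (T 1) = T (-1)) :
    ∀ p : LaurentPolynomial ℤ,
      σ p = p ↔ ∃ f : Polynomial ℤ,
        p = Polynomial.aeval ((T 1 + T (-1) : LaurentPolynomial ℤ)) f := by
  -- first, `σ` agrees with `invert`
  have h1 : (T 1 : LaurentPolynomial ℤ) * T (-1) = 1 := by rw [← T_add]; norm_num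
  have hinv : σ (T (-1)) = T 1 := by
    have h := congrArg σ h1
    rw [map_mul, map_one, hσ] at h
    calc σ (T (-1)) = (T 1 * T (-1)) * σ (T (-1)) := by rw [h1, one_mul]
      _ = T 1 * (T (-1) * σ (T (-1))) := mul_assoc _ _ _
      _ = T 1 := by rw [h, mul_one]
  have hT : ∀ n : ℤ, σ (T n) = T (-n) := by
    intro n
    rcases le_or_gt 0 n with h | h
    · obtain ⟨m, rfl⟩ := Int.eq_ofNat_of_zero_le h
      have : (T (m : ℤ) : LaurentPolynomial ℤ) = T 1 ^ m := by rw [T_pow]; norm_num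
      rw [this, map_pow, hσ, T_pow]
      norm_num
    · obtain ⟨m, rfl⟩ : ∃ m : ℕ, n = -(m : ℤ) := ⟨n.natAbs, by omega⟩
      have : (T (-(m : ℤ)) : LaurentPolynomial ℤ) = T (-1) ^ m := by rw [T_pow]; norm_num
      rw [this, map_pow, hinv, T_pow]
      norm_num
  have hσinv : ∀ p : LaurentPolynomial ℤ, σ p = invert p := by
    intro p
    induction p using LaurentPolynomial.induction_on' with
    | add p q hp hq => rw [map_add, map_add, hp, hq]
    | C_mul_T n a =>
      rw [map_mul, map_mul, hT, invert_T]
      congr 1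
      have : (C a : LaurentPolynomial ℤ) = (a : LaurentPolynomial ℤ) := by
        simp [eq_intCast]
      rw [this, map_intCast, map_intCast]
  intro p
  constructor
  · intro hp
    have hsym : ∀ n : ℤ, p.coeff (-n) = p.coeff n := by
      intro n
      conv_rhs => rw [← hp]
      rw [hσinv, invert_apply]
    have hbd : ∀ n : ℤ, (p.coeff.support.sup Int.natAbs) < n.natAbs → p.coeff n = 0 := by
      intro n hn
      by_contra hne
      exact absurd (Finset.le_sup (f := Int.natAbs) (Finsupp.mem_support_iff.2 hne)) (by omega)
    exact aux_sym _ p hsym hbd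
  · rintro ⟨f, rfl⟩
    rw [hσinv, ← Polynomial.aeval_algHom_apply (invert : LaurentPolynomial ℤ ≃ₐ[ℤ] _)]
    congr 1
    rw [map_add, invert_T, invert_T, neg_neg, add_comm]
end
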